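/- arXiv:2402.08271 — 2 statements merged into one kernel-verified Lean document; each statement's English description precedes it below -/
import Mathlib

section
/- Let F and G be two σ-fields, Y an F-measurable random variable, and X, X̄ random variables with X equal in law to X̄ and X̄ independent of F. Suppose that φ(X,Y) has the same conditional law given F as φ(X̄,Y) and that φ(X,Y) is conditionally independent of G given F. Let H = σ(F ∪ G). Then there exists a random variable X̃ (on a possibly enlarged probability space) with X̃ equal in law to X, X̃ independent of H, and φ(X,Y) having the same conditional law given H as φ(X̃,Y). -/
open MeasureTheory ProbabilityTheory

private lemma bolthausen_bdd_integrable {α : Type*} {mα : MeasurableSpace α} (μ : Measure α)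
    [IsFiniteMeasure μ] {f : α → ℝ} (hf : AEStronglyMeasurable f μ) (h : ∀ x, ‖f x‖ ≤ 1) :
    Integrable f μ :=
  Integrable.mono' (integrable_const 1) hf (Filter.Eventually.of_forall h)

private lemma bolthausen_sup_eq_generateFrom {Ω : Type*} (F G : MeasurableSpace Ω) :
    F ⊔ G = MeasurableSpace.generateFrom
      {u | ∃ s t, MeasurableSet[F] s ∧ MeasurableSet[G] t ∧ u = s ∩ t} := by
  apply le_antisymm
  · refine sup_le (fun s hs => ?_) (fun t ht => ?_)
    · exact MeasurableSpace.measurableSet_generateFrom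
        ⟨s, Set.univ, hs, MeasurableSet.univ, (Set.inter_univ s).symm⟩
    · exact MeasurableSpace.measurableSet_generateFrom
        ⟨Set.univ, t, MeasurableSet.univ, ht, (Set.univ_inter t).symm⟩
  · refine MeasurableSpace.generateFrom_le ?_
    rintro u ⟨s, t, hs, ht, rfl⟩
    exact MeasurableSet.inter (le_sup_left (α := MeasurableSpace Ω) s hs)
      (le_sup_right (α := MeasurableSpace Ω) t ht)

private lemma bolthausen_isPiSystem {Ω : Type*} (F G : MeasurableSpace Ω) :
    IsPiSystem {u | ∃ s t, MeasurableSet[F] s ∧ MeasurableSet[G] t ∧ u = s ∩ t} := by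
  rintro u1 ⟨s1, t1, hs1, ht1, rfl⟩ u2 ⟨s2, t2, hs2, ht2, rfl⟩ -
  refine ⟨s1 ∩ s2, t1 ∩ t2, hs1.inter hs2, ht1.inter ht2, ?_⟩
  ext x
  simp only [Set.mem_inter_iff]
  tauto

/-- **Extension of Bolthausen's conditioning lemma.** -/
theorem bolthausen_extension
    {Ω : Type} (F G : MeasurableSpace Ω)
    {m : MeasurableSpace Ω} (μ : Measure Ω) [IsProbabilityMeasure μ]
    {β γ δ : Type} [MeasurableSpace β] [MeasurableSpace γ] [MeasurableSpace δ]
    (hF : F ≤ m) (hG : G ≤ m)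
    (X Xb : Ω → β) (Y : Ω → γ) (φ : β → γ → δ)
    (hX : Measurable[m] X) (hXb : Measurable[m] Xb)
    (hφ : Measurable fun p : β × γ => φ p.1 p.2)
    (hY : Measurable[F] Y)
    (hlaw : Measure.map X μ = Measure.map Xb μ)
    (hXbF : Indep (MeasurableSpace.comap Xb inferInstance) F μ)
    (hcondlaw : ∀ A : Set δ, MeasurableSet A →
      MeasureTheory.condExp F μ
          (fun ω => Set.indicator A (fun _ => (1 : ℝ)) (φ (X ω) (Y ω)))
        =ᵐ[μ] MeasureTheory.condExp F μ
          (fun ω => Set.indicator A (fun _ => (1 : ℝ)) (φ (Xb ω) (Y ω))))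
    (hcondindep : ∀ A : Set δ, MeasurableSet A → ∀ B : Set Ω, MeasurableSet[G] B →
      MeasureTheory.condExp F μ
          (fun ω => Set.indicator A (fun _ => (1 : ℝ)) (φ (X ω) (Y ω))
            * Set.indicator B (fun _ => (1 : ℝ)) ω)
        =ᵐ[μ] fun ω =>
          MeasureTheory.condExp F μ
              (fun ω' => Set.indicator A (fun _ => (1 : ℝ)) (φ (X ω') (Y ω'))) ω
            * MeasureTheory.condExp F μ
              (fun ω' => Set.indicator B (fun _ => (1 : ℝ)) ω') ω) :
    ∃ (Ω' : Type) (m' : MeasurableSpace Ω') (μ' : Measure Ω') (π : Ω' → Ω) (Xt : Ω' → β),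
      IsProbabilityMeasure μ' ∧
      Measurable[m'] π ∧ Measure.map π μ' = μ ∧
      Measurable[m'] Xt ∧
      Measure.map Xt μ' = Measure.map X μ ∧
      Indep (MeasurableSpace.comap Xt inferInstance)
        (MeasurableSpace.comap π (F ⊔ G)) μ' ∧
      ∀ A : Set δ, MeasurableSet A →
        MeasureTheory.condExp (MeasurableSpace.comap π (F ⊔ G)) μ'
            (fun ω' => Set.indicator A (fun _ => (1 : ℝ)) (φ (X (π ω')) (Y (π ω'))))
          =ᵐ[μ'] MeasureTheory.condExp (MeasurableSpace.comap π (F ⊔ G)) μ'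
            (fun ω' => Set.indicator A (fun _ => (1 : ℝ)) (φ (Xt ω') (Y (π ω')))) := by
  classical
  have hYm : Measurable[m] Y := hY.mono hF le_rfl
  set ν : Measure β := Measure.map X μ with hνdef
  haveI hνprob : IsProbabilityMeasure ν := Measure.isProbabilityMeasure_map hX.aemeasurable
  have hM : F ⊔ G ≤ m := sup_le hF hG
  have hmapfst : Measure.map Prod.fst (μ.prod ν) = μ := by
    rw [Measure.map_fst_prod]; simp
  have hmapsnd : Measure.map Prod.snd (μ.prod ν) = ν := by
    rw [Measure.map_snd_prod]; simp
  -- independence of the two coordinates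
  have hind : IndepFun (Prod.fst : Ω × β → Ω) (Prod.snd : Ω × β → β) (μ.prod ν) := by
    rw [indepFun_iff_map_prod_eq_prod_map_map measurable_fst.aemeasurable
      measurable_snd.aemeasurable]
    have h1 : (fun p : Ω × β => (p.1, p.2)) = id := by funext p; rfl
    rw [h1, Measure.map_id, hmapfst, hmapsnd]
  refine ⟨Ω × β, Prod.instMeasurableSpace, μ.prod ν, Prod.fst, Prod.snd,
    inferInstance, measurable_fst, hmapfst, measurable_snd, hmapsnd, ?_, ?_⟩
  · exact indep_of_indep_of_le_right ((IndepFun_iff_Indep _ _ _).mp hind.symm)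
      (MeasurableSpace.comap_mono hM)
  intro A hA
  have hcl := hcondlaw A hA
  set q : δ → ℝ := Set.indicator A (fun _ => (1 : ℝ)) with hqdef
  have hq : Measurable q := measurable_const.indicator hA
  have hqb : ∀ d, ‖q d‖ ≤ 1 := by
    intro d
    by_cases h : d ∈ A <;>
      simp [hqdef, Set.indicator_of_mem, Set.indicator_of_notMem, h]
  have hqnn : ∀ d, (0 : ℝ) ≤ q d := fun d =>
    Set.indicator_nonneg (fun _ _ => zero_le_one) d
  set f : Ω → ℝ := fun ω => q (φ (X ω) (Y ω)) with hfdef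
  set fb : Ω → ℝ := fun ω => q (φ (Xb ω) (Y ω)) with hfbdef
  set g : γ → ℝ := fun y => ∫ x, q (φ x y) ∂ν with hgdef
  have hf_meas : Measurable[m] f := hq.comp (hφ.comp (hX.prodMk hYm))
  have hfb_meas : Measurable[m] fb := hq.comp (hφ.comp (hXb.prodMk hYm))
  have hf_int : Integrable f μ :=
    bolthausen_bdd_integrable μ hf_meas.aestronglyMeasurable (fun ω => hqb _)
  have hfb_int : Integrable fb μ :=
    bolthausen_bdd_integrable μ hfb_meas.aestronglyMeasurable (fun ω => hqb _)
  have hg_meas : Measurable g := by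
    have h1 : StronglyMeasurable fun p : γ × β => q (φ p.2 p.1) :=
      (hq.comp (hφ.comp (measurable_snd.prodMk measurable_fst))).stronglyMeasurable
    exact h1.integral_prod_right'.measurable
  have hgb : ∀ y, ‖g y‖ ≤ 1 := by
    intro y
    have h0 : 0 ≤ g y := integral_nonneg fun x => hqnn _
    have hqy_int : Integrable (fun x => q (φ x y)) ν :=
      bolthausen_bdd_integrable ν
        ((hq.comp (hφ.comp (measurable_id.prodMk measurable_const))).aestronglyMeasurable)
        (fun x => hqb _)
    have h1 : g y ≤ 1 := by
      have := integral_mono hqy_int (integrable_const (1 : ℝ))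
        (fun x => le_trans (le_abs_self _) (hqb (φ x y)))
      simpa using this
    rw [Real.norm_eq_abs, abs_of_nonneg h0]; exact h1
  have hgY_meas_F : Measurable[F] fun ω => g (Y ω) := hg_meas.comp hY
  have hgY_int : Integrable (fun ω => g (Y ω)) μ :=
    bolthausen_bdd_integrable μ ((hg_meas.comp hYm).aestronglyMeasurable) (fun ω => hgb _)
  -- Step A : for F-sets, the integral of fb is the integral of g ∘ Y
  have stepA : ∀ s : Set Ω, MeasurableSet[F] s →
      ∫ ω in s, fb ω ∂μ = ∫ ω in s, g (Y ω) ∂μ := by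
    intro s hs
    have hsm : MeasurableSet[m] s := hF s hs
    set W : Ω → Bool × γ := fun ω => (if ω ∈ s then true else false, Y ω) with hWdef
    have hW : Measurable[F] W :=
      Measurable.prodMk (Measurable.ite hs measurable_const measurable_const) hY
    have hWm : Measurable[m] W := hW.mono hF le_rfl
    set K : (Bool × γ) × β → ℝ :=
      fun p => (if p.1.1 then (1 : ℝ) else 0) * q (φ p.2 p.1.2) with hKdef
    have hbool : Measurable fun b : Bool => (if b = true then (1:ℝ) else 0) :=
      measurable_from_top
    have hK_meas : Measurable K := by
      have h1 : Measurable fun p : (Bool × γ) × β => (if p.1.1 = true then (1:ℝ) else 0) :=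
        hbool.comp (measurable_fst.comp measurable_fst)
      have h2 : Measurable fun p : (Bool × γ) × β => (p.2, p.1.2) :=
        measurable_snd.prodMk (measurable_snd.comp measurable_fst)
      exact h1.mul (hq.comp (hφ.comp h2))
    have hK_bdd : ∀ p, ‖K p‖ ≤ 1 := by
      intro p
      rw [hKdef]
      simp only [norm_mul]
      calc ‖if p.1.1 then (1:ℝ) else 0‖ * ‖q (φ p.2 p.1.2)‖
          ≤ 1 * 1 := by
            refine mul_le_mul ?_ (hqb _) (norm_nonneg _) zero_le_one
            by_cases h : p.1.1 <;> simp [h]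
        _ = 1 := mul_one 1
    have hIF : IndepFun W Xb μ := by
      rw [IndepFun_iff_Indep]
      exact (indep_of_indep_of_le_right hXbF hW.comap_le).symm
    have hmap : μ.map (fun ω => (W ω, Xb ω)) = (μ.map W).prod (μ.map Xb) :=
      (indepFun_iff_map_prod_eq_prod_map_map hWm.aemeasurable hXb.aemeasurable).mp hIF
    haveI : IsProbabilityMeasure (μ.map W) := Measure.isProbabilityMeasure_map hWm.aemeasurable
    calc ∫ ω in s, fb ω ∂μ
        = ∫ ω, Set.indicator s fb ω ∂μ := (integral_indicator hsm).symm
      _ = ∫ ω, K (W ω, Xb ω) ∂μ := by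
          refine integral_congr_ae (Filter.Eventually.of_forall fun ω => ?_)
          by_cases h : ω ∈ s <;>
            simp [hKdef, hWdef, hfbdef, Set.indicator_of_mem, Set.indicator_of_notMem, h]
      _ = ∫ p, K p ∂(μ.map (fun ω => (W ω, Xb ω))) :=
          (integral_map (hWm.prodMk hXb).aemeasurable
            hK_meas.stronglyMeasurable.aestronglyMeasurable).symm
      _ = ∫ p, K p ∂((μ.map W).prod ν) := by rw [hmap, ← hlaw]
      _ = ∫ w, (∫ x, K (w, x) ∂ν) ∂(μ.map W) :=
          integral_prod K (bolthausen_bdd_integrable _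
            hK_meas.stronglyMeasurable.aestronglyMeasurable hK_bdd)
      _ = ∫ w, (if w.1 then (1:ℝ) else 0) * g w.2 ∂(μ.map W) := by
          refine integral_congr_ae (Filter.Eventually.of_forall fun w => ?_)
          simp only [hKdef]
          by_cases h : w.1 = true
          · simp only [h, if_true, one_mul]; rfl
          · simp [h]
      _ = ∫ ω, (if (W ω).1 then (1:ℝ) else 0) * g ((W ω).2) ∂μ := by
          refine integral_map hWm.aemeasurable ?_
          refine (Measurable.stronglyMeasurable ?_).aestronglyMeasurable
          have h1 : Measurable fun w : Bool × γ => (if w.1 = true then (1:ℝ) else 0) :=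
        hbool.comp measurable_fst
          exact h1.mul (hg_meas.comp measurable_snd)
      _ = ∫ ω, Set.indicator s (fun ω => g (Y ω)) ω ∂μ := by
          refine integral_congr_ae (Filter.Eventually.of_forall fun ω => ?_)
          by_cases h : ω ∈ s <;>
            simp [hWdef, Set.indicator_of_mem, Set.indicator_of_notMem, h]
      _ = ∫ ω in s, g (Y ω) ∂μ := integral_indicator hsm
  -- Step A' : same for f, using the conditional law hypothesis
  have stepA' : ∀ s : Set Ω, MeasurableSet[F] s →
      ∫ ω in s, f ω ∂μ = ∫ ω in s, g (Y ω) ∂μ := by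
    intro s hs
    calc ∫ ω in s, f ω ∂μ
        = ∫ ω in s, (condExp F μ f) ω ∂μ := (setIntegral_condExp hF hf_int hs).symm
      _ = ∫ ω in s, (condExp F μ fb) ω ∂μ :=
          integral_congr_ae (ae_restrict_of_ae hcl)
      _ = ∫ ω in s, fb ω ∂μ := setIntegral_condExp hF hfb_int hs
      _ = ∫ ω in s, g (Y ω) ∂μ := stepA s hs
  -- Step B : identification of condExp F μ f
  have hcondf : (fun ω => g (Y ω)) =ᵐ[μ] condExp F μ f :=
    ae_eq_condExp_of_forall_setIntegral_eq hF hf_int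
      (fun s _ _ => hgY_int.integrableOn)
      (fun s hs _ => (stepA' s hs).symm)
      hgY_meas_F.stronglyMeasurable.aestronglyMeasurable
  -- Step C : on intersections s ∩ t with s ∈ F, t ∈ G
  have stepC : ∀ s, MeasurableSet[F] s → ∀ t, MeasurableSet[G] t →
      ∫ ω in s ∩ t, f ω ∂μ = ∫ ω in s ∩ t, g (Y ω) ∂μ := by
    intro s hs t ht
    have hci := hcondindep A hA t ht
    have hsm : MeasurableSet[m] s := hF s hs
    have htm : MeasurableSet[m] t := hG t ht
    set e : Ω → ℝ := Set.indicator t (fun _ => (1 : ℝ)) with hedef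
    have he_meas : Measurable[m] e := measurable_const.indicator htm
    have he_int : Integrable e μ := by
      refine bolthausen_bdd_integrable μ he_meas.aestronglyMeasurable (fun ω => ?_)
      by_cases h : ω ∈ t <;>
        simp [hedef, Set.indicator_of_mem, Set.indicator_of_notMem, h]
    have hfe_int : Integrable (fun ω => f ω * e ω) μ := by
      refine bolthausen_bdd_integrable μ
        ((hf_meas.mul he_meas).aestronglyMeasurable) (fun ω => ?_)
      rw [norm_mul]
      calc ‖f ω‖ * ‖e ω‖ ≤ 1 * 1 := by
            refine mul_le_mul (hqb _) ?_ (norm_nonneg _) zero_le_one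
            by_cases h : ω ∈ t <;>
              simp [hedef, Set.indicator_of_mem, Set.indicator_of_notMem, h]
        _ = 1 := mul_one 1
    have hgYe_int : Integrable (fun ω => g (Y ω) * e ω) μ := by
      refine bolthausen_bdd_integrable μ
        (((hg_meas.comp hYm).mul he_meas).aestronglyMeasurable) (fun ω => ?_)
      rw [norm_mul]
      calc ‖g (Y ω)‖ * ‖e ω‖ ≤ 1 * 1 := by
            refine mul_le_mul (hgb _) ?_ (norm_nonneg _) zero_le_one
            by_cases h : ω ∈ t <;>
              simp [hedef, Set.indicator_of_mem, Set.indicator_of_notMem, h]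
        _ = 1 := mul_one 1
    have hc1 : condExp F μ (fun ω => f ω * e ω)
        =ᵐ[μ] fun ω => g (Y ω) * (condExp F μ e) ω := by
      refine hci.trans ?_
      filter_upwards [hcondf] with ω hω
      rw [← hω]
    have hc2 : condExp F μ (fun ω => g (Y ω) * e ω)
        =ᵐ[μ] fun ω => g (Y ω) * (condExp F μ e) ω := by
      have := condExp_mul_of_stronglyMeasurable_left (μ := μ) (m := F) (mΩ := m)
        hgY_meas_F.stronglyMeasurable hgYe_int he_int
      exact this
    have hindst : ∀ (v : Ω → ℝ), (s ∩ t).indicator v = s.indicator (fun ω => v ω * e ω) := by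
      intro v
      funext ω
      by_cases h1 : ω ∈ s <;> by_cases h2 : ω ∈ t <;>
        simp [hedef, Set.indicator_of_mem, Set.indicator_of_notMem, h1, h2,
          Set.mem_inter_iff]
    calc ∫ ω in s ∩ t, f ω ∂μ
        = ∫ ω, (s ∩ t).indicator f ω ∂μ := (integral_indicator (hsm.inter htm)).symm
      _ = ∫ ω, s.indicator (fun ω => f ω * e ω) ω ∂μ := by rw [hindst f]
      _ = ∫ ω in s, f ω * e ω ∂μ := integral_indicator hsm
      _ = ∫ ω in s, (condExp F μ (fun ω => f ω * e ω)) ω ∂μ :=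
          (setIntegral_condExp hF hfe_int hs).symm
      _ = ∫ ω in s, g (Y ω) * (condExp F μ e) ω ∂μ :=
          integral_congr_ae (ae_restrict_of_ae hc1)
      _ = ∫ ω in s, (condExp F μ (fun ω => g (Y ω) * e ω)) ω ∂μ :=
          (integral_congr_ae (ae_restrict_of_ae hc2)).symm
      _ = ∫ ω in s, g (Y ω) * e ω ∂μ := setIntegral_condExp hF hgYe_int hs
      _ = ∫ ω, s.indicator (fun ω => g (Y ω) * e ω) ω ∂μ := (integral_indicator hsm).symm
      _ = ∫ ω, (s ∩ t).indicator (fun ω => g (Y ω)) ω ∂μ := by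
          rw [hindst (fun ω => g (Y ω))]
      _ = ∫ ω in s ∩ t, g (Y ω) ∂μ := integral_indicator (hsm.inter htm)
  -- Step D : extension to all of F ⊔ G by the π-λ theorem
  have huniv : ∫ ω, f ω ∂μ = ∫ ω, g (Y ω) ∂μ := by
    have := stepC Set.univ MeasurableSet.univ Set.univ MeasurableSet.univ
    simpa using this
  have stepD : ∀ u : Set Ω, MeasurableSet[F ⊔ G] u →
      ∫ ω in u, f ω ∂μ = ∫ ω in u, g (Y ω) ∂μ := by
    intro u hu
    refine MeasurableSpace.induction_on_inter (m := F ⊔ G)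
      (C := fun u _ => ∫ ω in u, f ω ∂μ = ∫ ω in u, g (Y ω) ∂μ)
      (s := {u | ∃ s t, MeasurableSet[F] s ∧ MeasurableSet[G] t ∧ u = s ∩ t})
      (bolthausen_sup_eq_generateFrom F G) (bolthausen_isPiSystem F G)
      (by simp) ?_ ?_ ?_ u hu
    · rintro v ⟨s, t, hs, ht, rfl⟩
      exact stepC s hs t ht
    · intro v hv hC
      have hvm : MeasurableSet[m] v := hM v hv
      have e1 := integral_add_compl hvm hf_int
      have e2 := integral_add_compl hvm hgY_int
      linarith [e1, e2, hC, huniv]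
    · intro w hdisj hwmeas hC
      have hwm : ∀ i, MeasurableSet[m] (w i) := fun i => hM _ (hwmeas i)
      rw [integral_iUnion hwm hdisj hf_int.integrableOn,
        integral_iUnion hwm hdisj hgY_int.integrableOn]
      exact tsum_congr hC
  -- Now move to the product space
  have hH : MeasurableSpace.comap (Prod.fst : Ω × β → Ω) (F ⊔ G) ≤ Prod.instMeasurableSpace :=
    (MeasurableSpace.comap_mono hM).trans measurable_fst.comap_le
  have hfstH : @Measurable (Ω × β) Ω (MeasurableSpace.comap (Prod.fst : Ω × β → Ω) (F ⊔ G)) (F ⊔ G) Prod.fst := Measurable.of_comap_le le_rfl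
  have hYM : Measurable[F ⊔ G] Y := hY.mono le_sup_left le_rfl
  have hgYfst_measH : Measurable[MeasurableSpace.comap (Prod.fst : Ω × β → Ω) (F ⊔ G)] fun p : Ω × β => g (Y p.1) :=
    (hg_meas.comp (hYM.comp hfstH))
  have hgYfst_int : Integrable (fun p : Ω × β => g (Y p.1)) (μ.prod ν) :=
    bolthausen_bdd_integrable _
      ((hg_meas.comp (hYm.comp measurable_fst)).aestronglyMeasurable) (fun p => hgb _)
  have hgYfst_set : ∀ u : Set Ω, MeasurableSet[m] u →
      ∫ p in Prod.fst ⁻¹' u, g (Y p.1) ∂(μ.prod ν) = ∫ ω in u, g (Y ω) ∂μ := by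
    intro u hum
    have h := setIntegral_map (μ := μ.prod ν) (g := (Prod.fst : Ω × β → Ω))
      (f := fun ω => g (Y ω)) hum
      (by rw [hmapfst]; exact (hg_meas.comp hYm).aestronglyMeasurable)
      measurable_fst.aemeasurable
    rw [hmapfst] at h
    exact h.symm
  -- Claim 1 : condExp of f ∘ fst
  have claim1 : (fun p : Ω × β => g (Y p.1))
      =ᵐ[μ.prod ν] condExp (MeasurableSpace.comap (Prod.fst : Ω × β → Ω) (F ⊔ G)) (μ.prod ν) (fun p => f p.1) := by
    refine ae_eq_condExp_of_forall_setIntegral_eq hH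
      (bolthausen_bdd_integrable _
        ((hf_meas.comp measurable_fst).aestronglyMeasurable) (fun p => hqb _))
      (fun s _ _ => hgYfst_int.integrableOn) ?_
      hgYfst_measH.stronglyMeasurable.aestronglyMeasurable
    intro s hsH _
    obtain ⟨u, hu, rfl⟩ := hsH
    have hum : MeasurableSet[m] u := hM u hu
    have h2 : ∫ p in Prod.fst ⁻¹' u, f p.1 ∂(μ.prod ν) = ∫ ω in u, f ω ∂μ := by
      have h := setIntegral_map (μ := μ.prod ν) (g := (Prod.fst : Ω × β → Ω))
        (f := f) hum
        (by rw [hmapfst]; exact hf_meas.aestronglyMeasurable)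
        measurable_fst.aemeasurable
      rw [hmapfst] at h
      exact h.symm
    rw [hgYfst_set u hum, h2]
    exact (stepD u hu).symm
  -- Claim 2 : condExp of the "fresh copy" version
  have claim2 : (fun p : Ω × β => g (Y p.1))
      =ᵐ[μ.prod ν] condExp (MeasurableSpace.comap (Prod.fst : Ω × β → Ω) (F ⊔ G)) (μ.prod ν) (fun p : Ω × β => q (φ p.2 (Y p.1))) := by
    have hk_meas : Measurable fun p : Ω × β => q (φ p.2 (Y p.1)) :=
      hq.comp (hφ.comp (measurable_snd.prodMk (hYm.comp measurable_fst)))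
    refine ae_eq_condExp_of_forall_setIntegral_eq hH
      (bolthausen_bdd_integrable _ hk_meas.aestronglyMeasurable (fun p => hqb _))
      (fun s _ _ => hgYfst_int.integrableOn) ?_
      hgYfst_measH.stronglyMeasurable.aestronglyMeasurable
    intro s hsH _
    obtain ⟨u, hu, rfl⟩ := hsH
    have hum : MeasurableSet[m] u := hM u hu
    have hrestr : (μ.prod ν).restrict (Prod.fst ⁻¹' u) = (μ.restrict u).prod ν := by
      rw [← Set.prod_univ, ← Measure.prod_restrict, Measure.restrict_univ]
    have h2 : ∫ p in Prod.fst ⁻¹' u, q (φ p.2 (Y p.1)) ∂(μ.prod ν)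
        = ∫ ω in u, g (Y ω) ∂μ := by
      rw [hrestr]
      haveI : IsFiniteMeasure (μ.restrict u) := inferInstance
      rw [integral_prod _ (bolthausen_bdd_integrable _
        hk_meas.aestronglyMeasurable (fun p => hqb _))]
    rw [hgYfst_set u hum, h2]
  exact claim1.symm.trans claim2
end

section
/- In the setting of the fixed-point system: for each δ > 1/√2 let σ(δ) > 0 solve δ² σ² = E[(σZ̄ + r̄)₊²] and set γ(δ) = P(σ(δ)Z̄ + r̄ > 0). Then γ(δ) < δ² for every δ > 1/√2. -/
open Real MeasureTheory ProbabilityTheory Filter Set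

lemma gpdf_eq (x : ℝ) :
    gaussianPDFReal 0 1 x = (Real.sqrt (2 * π))⁻¹ * Real.exp (-(2⁻¹) * x ^ 2) := by
  simp only [gaussianPDFReal, NNReal.coe_one, mul_one, sub_zero]
  congr 1
  ring_nf

lemma gpdf_le (x : ℝ) : gaussianPDFReal 0 1 x ≤ (Real.sqrt (2 * π))⁻¹ := by
  rw [gpdf_eq]
  have h1 : Real.exp (-(2⁻¹) * x ^ 2) ≤ 1 := by
    rw [Real.exp_le_one_iff]; nlinarith [sq_nonneg x]
  have h2 : (0:ℝ) < (Real.sqrt (2 * π))⁻¹ := by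
    positivity
  nlinarith

lemma integral_gaussianReal_eq (g : ℝ → ℝ) :
    ∫ x, g x ∂(gaussianReal 0 1) = ∫ x, gaussianPDFReal 0 1 x * g x := by
  rw [gaussianReal_of_var_ne_zero 0 one_ne_zero]
  have : (gaussianPDF 0 1) = fun x => ((gaussianPDFReal 0 1 x).toNNReal : ENNReal) := rfl
  rw [this, integral_withDensity_eq_integral_smul ((measurable_gaussianPDFReal 0 1).real_toNNReal) g]
  congr 1; ext x
  simp [NNReal.smul_def, Real.coe_toNNReal _ (gaussianPDFReal_nonneg 0 1 x)]

lemma integrable_gaussianReal_iff {g : ℝ → ℝ} :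
    Integrable g (gaussianReal 0 1) ↔
      Integrable (fun x => gaussianPDFReal 0 1 x * g x) volume := by
  rw [gaussianReal_of_var_ne_zero 0 one_ne_zero]
  have : (gaussianPDF 0 1) = fun x => ((gaussianPDFReal 0 1 x).toNNReal : ENNReal) := rfl
  rw [this, integrable_withDensity_iff_integrable_smul ((measurable_gaussianPDFReal 0 1).real_toNNReal)]
  apply integrable_congr
  filter_upwards with x
  simp [NNReal.smul_def, Real.coe_toNNReal _ (gaussianPDFReal_nonneg 0 1 x)]

lemma exp_half_tendsto : Tendsto (fun x : ℝ => Real.exp (-(2⁻¹) * x ^ 2)) atTop (nhds 0) := by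
  have hg : Tendsto (fun x : ℝ => 2⁻¹ * x ^ 2) atTop atTop :=
    (tendsto_pow_atTop two_ne_zero).const_mul_atTop (by norm_num)
  have := Real.tendsto_exp_neg_atTop_nhds_zero.comp hg
  refine this.congr (fun x => ?_)
  simp [Function.comp, neg_mul]

lemma hasDeriv_negexp (x : ℝ) : HasDerivAt (fun y : ℝ => -Real.exp (-(2⁻¹) * y ^ 2))
    (x * Real.exp (-(2⁻¹) * x ^ 2)) x := by
  have h1 := (((hasDerivAt_pow 2 x).const_mul ((-2⁻¹ : ℝ))).exp).neg
  exact h1.congr_deriv (by push_cast; ring)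

lemma integral_Ioi_id_mul_exp :
    ∫ x in Ioi (0:ℝ), x * Real.exp (-(2⁻¹) * x ^ 2) = 1 := by
  have hint : IntegrableOn (fun x : ℝ => x * Real.exp (-(2⁻¹) * x ^ 2)) (Ioi 0) :=
    (integrable_mul_exp_neg_mul_sq (by norm_num : (0:ℝ) < 2⁻¹)).integrableOn
  have htend : Tendsto (fun y : ℝ => -Real.exp (-(2⁻¹) * y ^ 2)) atTop (nhds 0) := by
    simpa using exp_half_tendsto.neg
  have := integral_Ioi_of_hasDerivAt_of_tendsto' (fun x _ => hasDeriv_negexp x) hint htend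
  rw [this]
  norm_num

lemma integrable_sq_exp : Integrable (fun x : ℝ => x ^ 2 * Real.exp (-(2⁻¹) * x ^ 2)) := by
  have h := integrable_rpow_mul_exp_neg_mul_sq (by norm_num : (0:ℝ) < 2⁻¹)
    (by norm_num : (-1:ℝ) < 2)
  refine h.congr (Filter.Eventually.of_forall fun x => ?_)
  simp only [Real.rpow_two]

lemma tendsto_id_mul_exp : Tendsto (fun x : ℝ => x * Real.exp (-(2⁻¹) * x ^ 2)) atTop (nhds 0) := by
  have h := rpow_mul_exp_neg_mul_sq_isLittleO_exp_neg (by norm_num : (0:ℝ) < 2⁻¹) (1:ℝ)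
  have h0 : Tendsto (fun x : ℝ => Real.exp (-(1/2) * x)) atTop (nhds 0) := by
    have hg : Tendsto (fun x : ℝ => (1/2 : ℝ) * x) atTop atTop :=
      tendsto_id.const_mul_atTop (by norm_num)
    have := Real.tendsto_exp_neg_atTop_nhds_zero.comp hg
    refine this.congr (fun x => ?_)
    simp [Function.comp, neg_mul]
  have := h.tendsto_zero_of_tendsto h0
  refine this.congr (fun x => by rw [Real.rpow_one])

lemma integral_Ioi_sq_mul_exp :
    ∫ x in Ioi (0:ℝ), x ^ 2 * Real.exp (-(2⁻¹) * x ^ 2) = Real.sqrt (2 * π) / 2 := by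
  have hexp : IntegrableOn (fun x : ℝ => Real.exp (-(2⁻¹) * x ^ 2)) (Ioi 0) :=
    (integrable_exp_neg_mul_sq (by norm_num : (0:ℝ) < 2⁻¹)).integrableOn
  have hsq : IntegrableOn (fun x : ℝ => x ^ 2 * Real.exp (-(2⁻¹) * x ^ 2)) (Ioi 0) :=
    integrable_sq_exp.integrableOn
  have hderiv : ∀ x ∈ Ici (0:ℝ), HasDerivAt (fun y : ℝ => -(y * Real.exp (-(2⁻¹) * y ^ 2)))
      (x ^ 2 * Real.exp (-(2⁻¹) * x ^ 2) - Real.exp (-(2⁻¹) * x ^ 2)) x := by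
    intro x _
    have h2 := ((hasDerivAt_id x).mul ((hasDerivAt_pow 2 x).const_mul ((-2⁻¹ : ℝ))).exp).neg
    exact h2.congr_deriv (by simp; ring)
  have htend : Tendsto (fun y : ℝ => -(y * Real.exp (-(2⁻¹) * y ^ 2))) atTop (nhds 0) := by
    simpa using tendsto_id_mul_exp.neg
  have key := integral_Ioi_of_hasDerivAt_of_tendsto' hderiv (hsq.sub hexp) htend
  rw [integral_sub hsq hexp] at key
  have hg : ∫ x in Ioi (0:ℝ), Real.exp (-(2⁻¹) * x ^ 2) = Real.sqrt (2 * π) / 2 := by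
    rw [integral_gaussian_Ioi, show π / 2⁻¹ = 2 * π from by ring]
  rw [hg] at key
  simp only [zero_mul, neg_zero, sub_zero] at key
  linarith


lemma sqrt_two_pi_pos : 0 < Real.sqrt (2 * π) := by positivity

lemma max_indicator (c : ℝ → ℝ) (x : ℝ) :
    c x * max x 0 = Set.indicator (Ioi (0:ℝ)) (fun y => c y * y) x := by
  rcases lt_or_ge 0 x with h | h
  · rw [Set.indicator_of_mem (Set.mem_Ioi.mpr h), max_eq_left h.le]
  · rw [Set.indicator_of_notMem (by simpa using h), max_eq_right h, mul_zero]

lemma max_sq_indicator (c : ℝ → ℝ) (x : ℝ) :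
    c x * max x 0 ^ 2 = Set.indicator (Ioi (0:ℝ)) (fun y => c y * y ^ 2) x := by
  rcases lt_or_ge 0 x with h | h
  · rw [Set.indicator_of_mem (Set.mem_Ioi.mpr h), max_eq_left h.le]
  · rw [Set.indicator_of_notMem (by simpa using h), max_eq_right h]
    norm_num

lemma abs_max_le (x : ℝ) : |max x 0| ≤ |x| := by
  rw [abs_of_nonneg (le_max_right x 0)]
  exact max_le (le_abs_self x) (abs_nonneg x)

lemma integral_max_gaussian :
    ∫ x, max x 0 ∂(gaussianReal 0 1) = (Real.sqrt (2 * π))⁻¹ := by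
  rw [integral_gaussianReal_eq]
  have h1 : (fun x => gaussianPDFReal 0 1 x * max x 0)
      = Set.indicator (Ioi (0:ℝ)) (fun y => gaussianPDFReal 0 1 y * y) :=
    funext fun x => max_indicator _ x
  rw [h1, integral_indicator measurableSet_Ioi]
  have h2 : ∀ y : ℝ, gaussianPDFReal 0 1 y * y
      = (Real.sqrt (2 * π))⁻¹ * (y * Real.exp (-(2⁻¹) * y ^ 2)) := by
    intro y; rw [gpdf_eq]; ring
  simp only [h2]
  rw [integral_const_mul, integral_Ioi_id_mul_exp, mul_one]

lemma integral_max_sq_gaussian :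
    ∫ x, max x 0 ^ 2 ∂(gaussianReal 0 1) = 1 / 2 := by
  rw [integral_gaussianReal_eq]
  have h1 : (fun x => gaussianPDFReal 0 1 x * max x 0 ^ 2)
      = Set.indicator (Ioi (0:ℝ)) (fun y => gaussianPDFReal 0 1 y * y ^ 2) :=
    funext fun x => max_sq_indicator _ x
  rw [h1, integral_indicator measurableSet_Ioi]
  have h2 : ∀ y : ℝ, gaussianPDFReal 0 1 y * y ^ 2
      = (Real.sqrt (2 * π))⁻¹ * (y ^ 2 * Real.exp (-(2⁻¹) * y ^ 2)) := by
    intro y; rw [gpdf_eq]; ring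
  simp only [h2]
  rw [integral_const_mul, integral_Ioi_sq_mul_exp]
  field_simp

lemma integrable_max_gaussian : Integrable (fun x => max x 0) (gaussianReal 0 1) := by
  rw [integrable_gaussianReal_iff]
  have hg : Integrable (fun x : ℝ => (Real.sqrt (2 * π))⁻¹ * |x * Real.exp (-(2⁻¹) * x ^ 2)|) :=
    ((integrable_mul_exp_neg_mul_sq (by norm_num : (0:ℝ) < 2⁻¹)).abs).const_mul _
  refine hg.mono' ?_ ?_
  · exact ((measurable_gaussianPDFReal 0 1).mul
      (measurable_id.max measurable_const)).aestronglyMeasurable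
  · filter_upwards with x
    have he : 0 < Real.exp (-(2⁻¹) * x ^ 2) := Real.exp_pos _
    calc ‖gaussianPDFReal 0 1 x * max x 0‖
        = gaussianPDFReal 0 1 x * |max x 0| := by
          rw [Real.norm_eq_abs, abs_mul, abs_of_nonneg (gaussianPDFReal_nonneg 0 1 x)]
      _ ≤ gaussianPDFReal 0 1 x * |x| :=
          mul_le_mul_of_nonneg_left (abs_max_le x) (gaussianPDFReal_nonneg 0 1 x)
      _ = (Real.sqrt (2 * π))⁻¹ * |x * Real.exp (-(2⁻¹) * x ^ 2)| := by
          rw [gpdf_eq, abs_mul, abs_of_pos he]; ring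

lemma integrable_max_sq_gaussian : Integrable (fun x => max x 0 ^ 2) (gaussianReal 0 1) := by
  rw [integrable_gaussianReal_iff]
  have hg : Integrable (fun x : ℝ => (Real.sqrt (2 * π))⁻¹ * |x ^ 2 * Real.exp (-(2⁻¹) * x ^ 2)|) :=
    (integrable_sq_exp.abs).const_mul _
  refine hg.mono' ?_ ?_
  · exact ((measurable_gaussianPDFReal 0 1).mul
      ((measurable_id.max measurable_const).pow_const 2)).aestronglyMeasurable
  · filter_upwards with x
    have he : 0 < Real.exp (-(2⁻¹) * x ^ 2) := Real.exp_pos _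
    have hm : max x 0 ^ 2 ≤ x ^ 2 := by
      have := abs_max_le x
      have h0 : 0 ≤ max x 0 := le_max_right x 0
      calc max x 0 ^ 2 = |max x 0| ^ 2 := by rw [sq_abs]
        _ ≤ |x| ^ 2 := by nlinarith [abs_nonneg (max x 0)]
        _ = x ^ 2 := sq_abs x
    calc ‖gaussianPDFReal 0 1 x * max x 0 ^ 2‖
        = gaussianPDFReal 0 1 x * max x 0 ^ 2 := by
          rw [Real.norm_eq_abs, abs_of_nonneg
            (mul_nonneg (gaussianPDFReal_nonneg 0 1 x) (sq_nonneg _))]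
      _ ≤ gaussianPDFReal 0 1 x * x ^ 2 :=
          mul_le_mul_of_nonneg_left hm (gaussianPDFReal_nonneg 0 1 x)
      _ = (Real.sqrt (2 * π))⁻¹ * |x ^ 2 * Real.exp (-(2⁻¹) * x ^ 2)| := by
          rw [gpdf_eq, abs_mul, abs_of_pos he, abs_of_nonneg (sq_nonneg x)]; ring

lemma gaussianReal_neg_map : (gaussianReal 0 1).map (fun x : ℝ => -x) = gaussianReal 0 1 := by
  have h := gaussianReal_map_const_mul (μ := 0) (v := 1) (-1 : ℝ)
  have h2 : (fun x : ℝ => -1 * x) = (fun x : ℝ => -x) := by funext x; ring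
  rw [show ((-1 : ℝ) * · ) = (fun x : ℝ => -1 * x) from rfl, h2] at h
  rw [h]
  norm_num

lemma gaussianReal_Ioi_zero : (gaussianReal 0 1) (Ioi (0:ℝ)) = ENNReal.ofReal (1/2) := by
  have hsym : gaussianReal 0 1 (Ioi (0:ℝ)) = gaussianReal 0 1 (Iio 0) := by
    conv_lhs => rw [← gaussianReal_neg_map]
    rw [Measure.map_apply measurable_neg measurableSet_Ioi]
    congr 1
    ext x
    simp
  have hzero : gaussianReal 0 1 ({0} : Set ℝ) = 0 :=
    gaussianReal_absolutelyContinuous 0 one_ne_zero (measure_singleton 0)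
  have hcompl : gaussianReal 0 1 ({(0:ℝ)}ᶜ) = 1 := by
    rw [measure_compl (measurableSet_singleton 0) (measure_ne_top _ _), hzero]
    simp
  have hunion : gaussianReal 0 1 (Iio (0:ℝ)) + gaussianReal 0 1 (Ioi 0) = 1 := by
    rw [← measure_union ((Set.Iio_disjoint_Ici le_rfl).mono_right Set.Ioi_subset_Ici_self) measurableSet_Ioi, Set.Iio_union_Ioi]
    exact hcompl
  rw [hsym] at hunion ⊢
  have hne : gaussianReal 0 1 (Iio (0:ℝ)) ≠ ⊤ := measure_ne_top _ _
  have := congrArg ENNReal.toReal hunion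
  rw [ENNReal.toReal_add hne hne] at this
  simp only [ENNReal.toReal_one] at this
  rw [← ENNReal.ofReal_toReal hne]
  congr 1
  linarith

lemma gaussianReal_Ioc_le (s : ℝ) :
    (gaussianReal 0 1) (Ioc (-s) 0) ≤ ENNReal.ofReal ((Real.sqrt (2 * π))⁻¹ * s) := by
  rw [gaussianReal_of_var_ne_zero 0 one_ne_zero, withDensity_apply _ measurableSet_Ioc]
  calc ∫⁻ x in Ioc (-s) 0, gaussianPDF 0 1 x
      ≤ ∫⁻ _ in Ioc (-s) 0, ENNReal.ofReal ((Real.sqrt (2 * π))⁻¹) := by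
        refine setLIntegral_mono measurable_const (fun x _ => ?_)
        exact ENNReal.ofReal_le_ofReal (gpdf_le x)
    _ = ENNReal.ofReal ((Real.sqrt (2 * π))⁻¹) * volume (Ioc (-s) 0) := by
        rw [setLIntegral_const]
    _ ≤ ENNReal.ofReal ((Real.sqrt (2 * π))⁻¹ * s) := by
        rw [Real.volume_Ioc, ← ENNReal.ofReal_mul (by positivity)]
        apply ENNReal.ofReal_le_ofReal
        nlinarith [Real.sqrt_nonneg (2*π), inv_nonneg.mpr (Real.sqrt_nonneg (2*π))]

lemma gaussianReal_Ioi_le {s : ℝ} (hs : 0 ≤ s) :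
    (gaussianReal 0 1) (Ioi (-s)) ≤ ENNReal.ofReal (1/2 + (Real.sqrt (2 * π))⁻¹ * s) := by
  have hsplit : Ioi (-s) = Ioc (-s) 0 ∪ Ioi (0:ℝ) :=
    (Set.Ioc_union_Ioi_eq_Ioi (by linarith)).symm
  rw [hsplit, ENNReal.ofReal_add (by norm_num) (by positivity)]
  calc (gaussianReal 0 1) (Ioc (-s) 0 ∪ Ioi 0)
      ≤ (gaussianReal 0 1) (Ioc (-s) 0) + (gaussianReal 0 1) (Ioi 0) := measure_union_le _ _
    _ ≤ ENNReal.ofReal ((Real.sqrt (2 * π))⁻¹ * s) + ENNReal.ofReal (1/2) := by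
        rw [gaussianReal_Ioi_zero]
        exact add_le_add_left (gaussianReal_Ioc_le s) _
    _ = ENNReal.ofReal (1/2) + ENNReal.ofReal ((Real.sqrt (2 * π))⁻¹ * s) := by ring

/-- **`γ(δ) < δ²`.** For each `δ > 1/√2`, if `σ > 0` solves `δ² σ² = E[(σZ̄ + r̄)₊²]` and
`γ = P(σZ̄ + r̄ > 0)`, then `γ < δ²`. -/
theorem gamma_lt_delta_sq
    {Ω : Type} [MeasurableSpace Ω] (P : Measure Ω) [IsProbabilityMeasure P]
    (Z r : Ω → ℝ) (hZmeas : Measurable Z) (hrmeas : Measurable r)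
    (hZ : Measure.map Z P = gaussianReal 0 1)
    (hindep : IndepFun Z r P)
    (hrpos : ∀ᵐ ω ∂P, 0 ≤ r ω)
    (hrmom : Integrable (fun ω => r ω ^ 2) P)
    (hrlaw : Measure.map r P ≠ Measure.dirac 0) :
    ∀ δ : ℝ, 1 / Real.sqrt 2 < δ → ∀ σ : ℝ, 0 < σ →
      δ ^ 2 * σ ^ 2 = (∫ ω, max (σ * Z ω + r ω) 0 ^ 2 ∂P) →
      (P {ω | 0 < σ * Z ω + r ω}).toReal < δ ^ 2 := by
  intro δ hδ σ hσ heq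
  have hδ0 : (0:ℝ) < δ := lt_trans (by positivity) hδ
  set c : ℝ := (Real.sqrt (2 * π))⁻¹ with hc
  have hc0 : 0 < c := by rw [hc]; positivity
  -- integrability of r
  have hrint : Integrable r P := by
    refine ((integrable_const (1:ℝ)).add hrmom).mono' hrmeas.aestronglyMeasurable ?_
    filter_upwards with ω
    rw [Real.norm_eq_abs]
    simp only [Pi.add_apply]
    nlinarith [sq_nonneg (|r ω| - 1), sq_abs (r ω), abs_nonneg (r ω)]
  set R := ∫ ω, r ω ∂P with hR
  have hR0 : 0 ≤ R := integral_nonneg_of_ae hrpos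
  have hRpos : 0 < R := by
    rcases hR0.lt_or_eq with h | h
    · exact h
    · exfalso
      apply hrlaw
      have hzero : r =ᵐ[P] 0 := (integral_eq_zero_iff_of_nonneg_ae hrpos hrint).mp h.symm
      calc Measure.map r P = Measure.map (fun _ => (0:ℝ)) P := Measure.map_congr hzero
        _ = Measure.dirac 0 := by rw [Measure.map_const]; simp
  set ν := Measure.map r P with hν
  have hνprob : IsProbabilityMeasure ν := Measure.isProbabilityMeasure_map hrmeas.aemeasurable
  have hν_nonneg : ∀ᵐ t ∂ν, 0 ≤ t := by
    rw [hν]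
    exact (ae_map_iff hrmeas.aemeasurable (measurableSet_Ici : MeasurableSet (Set.Ici (0:ℝ)))).mpr
      hrpos
  have hνint : Integrable (fun t : ℝ => t) ν := by
    have h : Integrable id ν := by
      rw [hν]
      exact (integrable_map_measure aestronglyMeasurable_id hrmeas.aemeasurable).mpr hrint
    exact h
  have hνR : ∫ t, t ∂ν = R := by
    rw [hν]
    exact integral_map hrmeas.aemeasurable aestronglyMeasurable_id
  -- Step 1 : gamma bound
  have hslice : ∀ t : ℝ, 0 ≤ t →
      (gaussianReal 0 1) {z : ℝ | 0 < σ * z + t} ≤ ENNReal.ofReal (1/2 + c * (t / σ)) := by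
    intro t ht
    have hset : {z : ℝ | 0 < σ * z + t} = Set.Ioi (-(t/σ)) := by
      ext z
      simp only [Set.mem_setOf_eq, Set.mem_Ioi]
      constructor <;> intro h <;> nlinarith [div_mul_cancel₀ t hσ.ne', hσ]
    rw [hset]
    have h2 := gaussianReal_Ioi_le (s := t/σ) (by positivity)
    rw [← hc] at h2
    exact h2
  have hpair : Measure.map (fun ω => (Z ω, r ω)) P = (gaussianReal 0 1).prod ν := by
    rw [hν, ← hZ]
    exact (indepFun_iff_map_prod_eq_prod_map_map hZmeas.aemeasurable
      hrmeas.aemeasurable).mp hindep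
  have hSmeas : MeasurableSet {p : ℝ × ℝ | 0 < σ * p.1 + p.2} :=
    measurableSet_lt measurable_const ((measurable_fst.const_mul σ).add measurable_snd)
  have hPA : P {ω | 0 < σ * Z ω + r ω}
      = ((gaussianReal 0 1).prod ν) {p : ℝ × ℝ | 0 < σ * p.1 + p.2} := by
    rw [← hpair, Measure.map_apply (hZmeas.prodMk hrmeas) hSmeas]
    rfl
  have hgamma : (P {ω | 0 < σ * Z ω + r ω}).toReal ≤ 1/2 + c * (R / σ) := by
    have hintb : Integrable (fun t : ℝ => 1/2 + c * (t/σ)) ν :=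
      (integrable_const _).add ((hνint.div_const σ).const_mul c)
    have hb : P {ω | 0 < σ * Z ω + r ω} ≤ ENNReal.ofReal (1/2 + c * (R / σ)) := by
      rw [hPA, Measure.prod_apply_symm hSmeas]
      calc ∫⁻ t, (gaussianReal 0 1) ((fun z => (z, t)) ⁻¹' {p : ℝ × ℝ | 0 < σ * p.1 + p.2}) ∂ν
          ≤ ∫⁻ t, ENNReal.ofReal (1/2 + c * (t / σ)) ∂ν := by
            refine lintegral_mono_ae ?_
            filter_upwards [hν_nonneg] with t ht
            exact hslice t ht
        _ = ENNReal.ofReal (∫ t, (1/2 + c * (t/σ)) ∂ν) := by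
            rw [← ofReal_integral_eq_lintegral_ofReal hintb]
            filter_upwards [hν_nonneg] with t ht
            positivity
        _ = ENNReal.ofReal (1/2 + c * (R / σ)) := by
            congr 1
            rw [integral_add (integrable_const _) ((hνint.div_const σ).const_mul c),
              integral_const, integral_const_mul]
            have h9 : ∫ t, t / σ ∂ν = R / σ := by
              rw [integral_div, hνR]
            rw [h9]
            simp
    calc (P {ω | 0 < σ * Z ω + r ω}).toReal
        ≤ (ENNReal.ofReal (1/2 + c * (R / σ))).toReal :=
          ENNReal.toReal_mono ENNReal.ofReal_ne_top hb
      _ = 1/2 + c * (R / σ) := ENNReal.toReal_ofReal (by positivity)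
  -- Step 2: integrability of the target
  have hFint : Integrable (fun ω => max (σ * Z ω + r ω) 0 ^ 2) P := by
    by_contra h
    rw [integral_undef h] at heq
    have : (0:ℝ) < δ ^ 2 * σ ^ 2 := by positivity
    linarith
  -- Step 3: Gaussian moments transferred to P
  have hmaxmeas : AEStronglyMeasurable (fun x : ℝ => max x 0) (Measure.map Z P) :=
    (measurable_id.max measurable_const).aestronglyMeasurable
  have hmaxsqmeas : AEStronglyMeasurable (fun x : ℝ => max x 0 ^ 2) (Measure.map Z P) :=
    ((measurable_id.max measurable_const).pow_const 2).aestronglyMeasurable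
  have hZmax_int : Integrable (fun ω => max (Z ω) 0) P := by
    have h := integrable_max_gaussian
    rw [← hZ] at h
    exact (integrable_map_measure hmaxmeas hZmeas.aemeasurable).mp h
  have hZmaxsq_int : Integrable (fun ω => max (Z ω) 0 ^ 2) P := by
    have h := integrable_max_sq_gaussian
    rw [← hZ] at h
    exact (integrable_map_measure hmaxsqmeas hZmeas.aemeasurable).mp h
  have hEmax : ∫ ω, max (Z ω) 0 ∂P = c := by
    have h := integral_map hZmeas.aemeasurable hmaxmeas
    rw [hZ, integral_max_gaussian] at h
    rw [← h, hc]
  have hEmaxsq : ∫ ω, max (Z ω) 0 ^ 2 ∂P = 1/2 := by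
    have h := integral_map hZmeas.aemeasurable hmaxsqmeas
    rw [hZ, integral_max_sq_gaussian] at h
    rw [← h]
  have hindep' : IndepFun (fun ω => max (Z ω) 0) r P :=
    hindep.comp (measurable_id.max measurable_const) measurable_id
  have hprod_int : Integrable (fun ω => r ω * max (Z ω) 0) P := by
    have h := hindep'.integrable_mul hZmax_int hrint
    exact h.congr (Filter.Eventually.of_forall fun ω => mul_comm _ _)
  have hprod : ∫ ω, r ω * max (Z ω) 0 ∂P = R * c := by
    have h := hindep'.symm.integral_fun_mul_eq_mul_integral hrint.aestronglyMeasurable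
      hZmax_int.aestronglyMeasurable
    rw [h, hEmax, ← hR]
  have hpoint : ∀ ω, σ^2 * max (Z ω) 0 ^ 2 + 2*σ*(r ω * max (Z ω) 0)
      ≤ max (σ * Z ω + r ω) 0 ^ 2 := by
    intro ω
    set a := Z ω with ha'
    set b := r ω with hb'
    rcases le_total a 0 with ha | ha
    · rw [max_eq_right ha]
      have h0 : (0:ℝ) ≤ max (σ*a+b) 0 ^ 2 := sq_nonneg _
      nlinarith
    · rw [max_eq_left ha]
      rcases le_total (σ*a+b) 0 with hab | hab
      · rw [max_eq_right hab]
        nlinarith [mul_nonneg hσ.le ha, sq_nonneg (σ*a), mul_nonneg (mul_nonneg hσ.le ha)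
          (neg_nonneg.mpr hab)]
      · rw [max_eq_left hab]
        nlinarith [sq_nonneg b]
  have hsum_int : Integrable (fun ω => σ^2 * max (Z ω) 0 ^ 2 + 2*σ*(r ω * max (Z ω) 0)) P :=
    (hZmaxsq_int.const_mul _).add (hprod_int.const_mul _)
  have hlow : σ^2 * (1/2) + 2*σ*(R*c) ≤ ∫ ω, max (σ * Z ω + r ω) 0 ^ 2 ∂P := by
    have hsum : ∫ ω, (σ^2 * max (Z ω) 0 ^ 2 + 2*σ*(r ω * max (Z ω) 0)) ∂P
        = σ^2 * (1/2) + 2*σ*(R*c) := by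
      rw [integral_add (hZmaxsq_int.const_mul _) (hprod_int.const_mul _),
        integral_const_mul, integral_const_mul, hEmaxsq, hprod]
    rw [← hsum]
    exact integral_mono hsum_int hFint hpoint
  -- Final arithmetic
  have hσ2 : (0:ℝ) < σ^2 := by positivity
  have hexpand : (1/2 + c * (R/σ)) * σ^2 = 1/2*σ^2 + c*R*σ := by
    field_simp
  have h1 : (P {ω | 0 < σ * Z ω + r ω}).toReal * σ^2 ≤ 1/2*σ^2 + c*R*σ := by
    have := mul_le_mul_of_nonneg_right hgamma hσ2.le
    linarith [hexpand]
  have h2 : 1/2*σ^2 + 2*(c*R*σ) ≤ δ^2*σ^2 := by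
    rw [heq]
    nlinarith [hlow]
  have hpos : 0 < c*R*σ := by positivity
  have hfin : (P {ω | 0 < σ * Z ω + r ω}).toReal * σ^2 < δ^2*σ^2 := by linarith
  exact (mul_lt_mul_iff_of_pos_right hσ2).mp hfin
end
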